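/- With the main setup (λ₁, λ₂, λ₃ nonzero reals, η real, 219/220 < γ < 1, θ > 0, 0 < λ₀ < 1; ε = X^{(219−220γ)/208+θ}; H = (log² X)/ε; Θ the Fourier transform of a smoothing function θ̂ with parameter ε and smoothness order k = ⌊log X⌋, so that |Θ(x)| ≤ (1/(π|x|))(k/(2π|x|ε/8))^k; S₁ and S₄ the Piatetski-Shapiro exponential sums S₁(t) = Σ_{λ₀X < p ≤ X, p=⌊n^{1/γ}⌋} p^{1−γ} e(tp) log p and S₄(t) = Σ_{λ₀X < p⁴ ≤ X, p=⌊n^{1/γ}⌋} p^{1−γ} e(tp⁴) log p), the tail integral Γ₃(X) = ∫_{|t|>H} Θ(t) S₁(λ₁t) S₁(λ₂t) S₄(λ₃t) e(ηt) dt satisfies Γ₃(X) ≪ 1 as X → ∞. -/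

import Mathlib

/-- `e(t) = e^{2πit}`. -/
noncomputable def e (t : ℝ) : ℂ := Complex.exp (2 * Real.pi * Complex.I * t)

/-- A Piatetski-Shapiro prime of type `γ`: a prime `p` with `p = ⌊n^{1/γ}⌋` for some `n : ℕ`. -/
def IsPSPrime (γ : ℝ) (p : ℕ) : Prop :=
  Nat.Prime p ∧ ∃ n : ℕ, (p : ℤ) = ⌊(n : ℝ) ^ (1 / γ)⌋

open Classical in
/-- `S₁(t) = Σ_{λ₀X < p ≤ X, p = ⌊n^{1/γ}⌋} p^{1-γ} e(tp) log p`. -/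
noncomputable def S₁ (γ l₀ X t : ℝ) : ℂ :=
  ∑ p ∈ Finset.range (⌊X⌋₊ + 1),
    if IsPSPrime γ p ∧ l₀ * X < (p : ℝ) ∧ (p : ℝ) ≤ X then
      ((p : ℝ) ^ (1 - γ) * Real.log p : ℝ) * e (t * p)
    else 0

open Classical in
/-- `S₄(t) = Σ_{λ₀X < p⁴ ≤ X, p = ⌊n^{1/γ}⌋} p^{1-γ} e(tp⁴) log p`. -/
noncomputable def S₄ (γ l₀ X t : ℝ) : ℂ :=
  ∑ p ∈ Finset.range (⌊X⌋₊ + 1),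
    if IsPSPrime γ p ∧ l₀ * X < (p : ℝ) ^ 4 ∧ (p : ℝ) ^ 4 ≤ X then
      ((p : ℝ) ^ (1 - γ) * Real.log p : ℝ) * e (t * (p : ℝ) ^ 4)
    else 0

/-- The Fourier transform `Θ(x) = ∫ θ(y) e(-xy) dy` of a real function `θ`. -/
noncomputable def fourierTrans (θ : ℝ → ℝ) (x : ℝ) : ℂ :=
  ∫ y : ℝ, (θ y : ℂ) * e (-(x * y))

/-- `ε = X^{(219-220γ)/208+θ}`. -/
noncomputable def eps (γ θ X : ℝ) : ℝ := X ^ ((219 - 220 * γ) / 208 + θ)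

/-- `H = (log² X)/ε`. -/
noncomputable def H (γ θ X : ℝ) : ℝ := Real.log X ^ 2 / eps γ θ X

lemma e_norm (t : ℝ) : ‖e t‖ = 1 := by
  unfold e
  rw [Complex.norm_exp]
  simp

open Classical in
lemma sum_bound (γ X : ℝ) (hγ0 : 0 ≤ γ) (hX : 1 ≤ X) (P : ℕ → Prop)
    (hP : ∀ p, P p → 1 ≤ (p:ℝ) ∧ (p:ℝ) ≤ X) (w : ℕ → ℝ) :
    ‖∑ p ∈ Finset.range (⌊X⌋₊ + 1),
        (if P p then (((p:ℝ) ^ (1 - γ) * Real.log p : ℝ) : ℂ) * e (w p) else 0)‖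
      ≤ 2 * X ^ 3 := by
  have hX0 : (0:ℝ) ≤ X := by linarith
  calc ‖∑ p ∈ Finset.range (⌊X⌋₊ + 1),
        (if P p then (((p:ℝ) ^ (1 - γ) * Real.log p : ℝ) : ℂ) * e (w p) else 0)‖
      ≤ ∑ p ∈ Finset.range (⌊X⌋₊ + 1),
        ‖(if P p then (((p:ℝ) ^ (1 - γ) * Real.log p : ℝ) : ℂ) * e (w p) else 0)‖ :=
        norm_sum_le _ _
    _ ≤ ∑ _p ∈ Finset.range (⌊X⌋₊ + 1), (X * X) := by
        refine Finset.sum_le_sum fun p _ => ?_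
        by_cases h : P p
        · simp only [h, if_true]
          rw [norm_mul, e_norm, mul_one, Complex.norm_real]
          obtain ⟨hp1, hpX⟩ := hP p h
          have hlog0 : 0 ≤ Real.log p := Real.log_nonneg hp1
          have h1 : (p:ℝ) ^ (1 - γ) ≤ X := by
            calc (p:ℝ) ^ (1 - γ) ≤ (p:ℝ) ^ (1:ℝ) :=
                  Real.rpow_le_rpow_of_exponent_le hp1 (by linarith)
              _ = (p:ℝ) := Real.rpow_one _
              _ ≤ X := hpX
          have h2 : Real.log p ≤ X := by
            have := Real.log_le_sub_one_of_pos (show (0:ℝ) < p by linarith)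
            linarith
          rw [Real.norm_eq_abs, abs_of_nonneg (mul_nonneg (Real.rpow_nonneg (by linarith) _) hlog0)]
          exact mul_le_mul h1 h2 hlog0 hX0
        · simp [h]; positivity
    _ = (⌊X⌋₊ + 1 : ℕ) * (X * X) := by rw [Finset.sum_const, Finset.card_range]; simp
    _ ≤ (X + 1) * (X * X) := by
        have : (⌊X⌋₊ : ℝ) ≤ X := Nat.floor_le hX0
        push_cast
        nlinarith
    _ ≤ 2 * X ^ 3 := by nlinarith

lemma S1_bound (γ l₀ X t : ℝ) (hγ0 : 0 ≤ γ) (hX : 1 ≤ X) : ‖S₁ γ l₀ X t‖ ≤ 2 * X ^ 3 := by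
  unfold S₁
  convert sum_bound γ X hγ0 hX
    (fun p => IsPSPrime γ p ∧ l₀ * X < (p : ℝ) ∧ (p : ℝ) ≤ X) (fun p hp => ?_) (fun p => t * p)
    using 4
  obtain ⟨⟨hpr, -⟩, -, hle⟩ := hp
  exact ⟨by exact_mod_cast hpr.one_lt.le, hle⟩

lemma S4_bound (γ l₀ X t : ℝ) (hγ0 : 0 ≤ γ) (hX : 1 ≤ X) : ‖S₄ γ l₀ X t‖ ≤ 2 * X ^ 3 := by
  unfold S₄
  convert sum_bound γ X hγ0 hX
    (fun p => IsPSPrime γ p ∧ l₀ * X < (p : ℝ) ^ 4 ∧ (p : ℝ) ^ 4 ≤ X) (fun p hp => ?_)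
    (fun p => t * (p:ℝ) ^ 4) using 4
  obtain ⟨⟨hpr, -⟩, -, hle⟩ := hp
  have h1 : (1:ℝ) ≤ (p:ℝ) := by exact_mod_cast hpr.one_lt.le
  exact ⟨h1, le_trans (le_self_pow₀ (by linarith) (by norm_num)) hle⟩

open MeasureTheory Set

set_option maxHeartbeats 1000000 in
lemma numeric (X ε : ℝ) (hX : Real.exp (Real.exp 100) ≤ X) (hε0 : 0 < ε) :
    2 * ((8 * X ^ 9 * (1 / Real.pi) * (4 * (⌊Real.log X⌋₊:ℝ) / (Real.pi * ε)) ^ ⌊Real.log X⌋₊) *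
      ((Real.log X ^ 2 / ε) ^ (-(⌊Real.log X⌋₊:ℝ)) / (⌊Real.log X⌋₊:ℝ))) ≤ 1 := by
  have hX0 : (0:ℝ) < X := lt_of_lt_of_le (Real.exp_pos _) hX
  have hlog : Real.exp 100 ≤ Real.log X := by
    rw [← Real.log_exp (Real.exp 100)]
    exact Real.log_le_log (Real.exp_pos _) hX
  have he100 : (101:ℝ) ≤ Real.exp 100 := by
    have := Real.add_one_le_exp (100:ℝ); linarith
  have hlog1 : (1:ℝ) ≤ Real.log X := by linarith
  set L := Real.log X with hL
  set k := ⌊Real.log X⌋₊ with hk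
  have hk1 : 1 ≤ k := Nat.le_floor (by exact_mod_cast hlog1)
  have hkR : (1:ℝ) ≤ (k:ℝ) := by exact_mod_cast hk1
  have hkle : (k:ℝ) ≤ L := Nat.floor_le (by linarith)
  have hklt : L < (k:ℝ) + 1 := Nat.lt_floor_add_one _
  have hπ : (3:ℝ) < Real.pi := Real.pi_gt_three
  have hHv0 : 0 < L ^ 2 / ε := div_pos (by positivity) hε0
  set Hv := L ^ 2 / ε with hHv
  have hrp : Hv ^ (-(k:ℝ)) = (Hv ^ (k:ℕ))⁻¹ := by
    rw [← Real.rpow_natCast Hv k, ← Real.rpow_neg hHv0.le]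
  rw [hrp]
  have hcollapse : (4 * (k:ℝ) / (Real.pi * ε)) ^ k * (Hv ^ (k:ℕ))⁻¹
      = (4 * (k:ℝ) / (Real.pi * L ^ 2)) ^ k := by
    rw [← inv_pow, ← mul_pow]
    congr 1
    rw [hHv]
    field_simp
  have hb1 : 4 * (k:ℝ) / (Real.pi * L ^ 2) ≤ 2 / L := by
    rw [div_le_div_iff₀ (by positivity) (by positivity)]
    nlinarith
  have hb1' : (0:ℝ) ≤ 4 * (k:ℝ) / (Real.pi * L ^ 2) := by positivity
  have hb2 : (4 * (k:ℝ) / (Real.pi * L ^ 2)) ^ k ≤ (2 / L) ^ k :=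
    pow_le_pow_left₀ hb1' hb1 k
  have hX9 : X ^ 9 ≤ Real.exp 9 * Real.exp 9 ^ k := by
    have h1 : X ^ 9 = Real.exp (9 * L) := by
      rw [← Real.exp_log hX0, ← Real.exp_nat_mul]
      norm_num
      exact hL.symm
    rw [h1]
    have h2 : Real.exp (9 * L) ≤ Real.exp (9 * ((k:ℝ) + 1)) :=
      Real.exp_le_exp.mpr (by nlinarith)
    calc Real.exp (9 * L) ≤ Real.exp (9 * ((k:ℝ) + 1)) := h2
      _ = Real.exp 9 * Real.exp 9 ^ k := by
          rw [show (9:ℝ) * ((k:ℝ) + 1) = 9 + (k:ℕ) * (9:ℝ) by push_cast; ring,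
            Real.exp_add, Real.exp_nat_mul]
  have hbase0 : (0:ℝ) ≤ 2 * Real.exp 9 / L := by positivity
  have he91 : (2:ℝ) ≤ Real.exp 91 := by
    have := Real.add_one_le_exp (91:ℝ); linarith
  have hLbig : 2 * Real.exp 9 ≤ L := by
    have : Real.exp 100 = Real.exp 91 * Real.exp 9 := by rw [← Real.exp_add]; norm_num
    nlinarith [Real.exp_pos (9:ℝ)]
  have hbase1 : 2 * Real.exp 9 / L ≤ 1 := by
    rw [div_le_one (by linarith)]; exact hLbig
  have hpow : (2 * Real.exp 9 / L) ^ k ≤ 2 * Real.exp 9 / L := by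
    calc (2 * Real.exp 9 / L) ^ k ≤ (2 * Real.exp 9 / L) ^ 1 :=
        pow_le_pow_of_le_one hbase0 hbase1 hk1
      _ = 2 * Real.exp 9 / L := pow_one _
  have hfin : (32:ℝ) * Real.exp 18 ≤ L := by
    have h1 : Real.exp 100 = Real.exp 82 * Real.exp 18 := by rw [← Real.exp_add]; norm_num
    have h2 : (83:ℝ) ≤ Real.exp 82 := by have := Real.add_one_le_exp (82:ℝ); linarith
    nlinarith [Real.exp_pos (18:ℝ)]
  -- assemble
  have he9pos := Real.exp_pos (9:ℝ)
  calc 2 * ((8 * X ^ 9 * (1 / Real.pi) * (4 * (k:ℝ) / (Real.pi * ε)) ^ k) *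
        ((Hv ^ (k:ℕ))⁻¹ / (k:ℝ)))
      = (16 * X ^ 9 / (Real.pi * k)) * ((4 * (k:ℝ) / (Real.pi * ε)) ^ k * (Hv ^ (k:ℕ))⁻¹) := by
        ring
    _ = (16 * X ^ 9 / (Real.pi * k)) * (4 * (k:ℝ) / (Real.pi * L ^ 2)) ^ k := by rw [hcollapse]
    _ ≤ (16 * X ^ 9) * (2 / L) ^ k := by
        have h1 : 16 * X ^ 9 / (Real.pi * k) ≤ 16 * X ^ 9 := by
          apply div_le_self (by positivity)
          nlinarith
        exact mul_le_mul h1 hb2 (by positivity) (by positivity)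
    _ ≤ 16 * (Real.exp 9 * Real.exp 9 ^ k) * (2 / L) ^ k := by
        have := pow_nonneg (show (0:ℝ) ≤ 2 / L by positivity) k
        nlinarith
    _ = 16 * Real.exp 9 * (2 * Real.exp 9 / L) ^ k := by
        rw [show (2:ℝ) * Real.exp 9 / L = Real.exp 9 * (2 / L) by ring, mul_pow]
        ring
    _ ≤ 16 * Real.exp 9 * (2 * Real.exp 9 / L) := by nlinarith
    _ = 32 * Real.exp 18 / L := by
        rw [show (18:ℝ) = 9 + 9 by norm_num, Real.exp_add]; ring
    _ ≤ 1 := by rw [div_le_one (by linarith)]; exact hfin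

set_option maxHeartbeats 1000000 in
theorem Gamma3_bound (l₁ l₂ l₃ l₀ η γ θ : ℝ)
    (h₁ : l₁ ≠ 0) (h₂ : l₂ ≠ 0) (h₃ : l₃ ≠ 0)
    (hl₀ : 0 < l₀) (hl₀1 : l₀ < 1)
    (hγ : 219 / 220 < γ) (hγ1 : γ < 1) (hθ : 0 < θ) :
    ∃ C > 0, ∃ X₀ : ℝ, ∀ X : ℝ, X₀ ≤ X → ∀ sm : ℝ → ℝ, Continuous sm →
      (∀ y : ℝ, |y| ≤ 3 * eps γ θ X / 4 → sm y = 1) →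
      (∀ y : ℝ, 3 * eps γ θ X / 4 < |y| → |y| < eps γ θ X → 0 < sm y ∧ sm y < 1) →
      (∀ y : ℝ, eps γ θ X ≤ |y| → sm y = 0) →
      (∀ x : ℝ, x ≠ 0 →
        ‖fourierTrans sm x‖ ≤
          1 / (Real.pi * |x|) *
            ((⌊Real.log X⌋₊ : ℝ) /
              (2 * Real.pi * |x| * eps γ θ X / 8)) ^ (⌊Real.log X⌋₊)) →
      ‖∫ t in {t : ℝ | H γ θ X < |t|},
          fourierTrans sm t * S₁ γ l₀ X (l₁ * t) * S₁ γ l₀ X (l₂ * t) *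
            S₄ γ l₀ X (l₃ * t) * e (η * t)‖ ≤ C := by
  refine ⟨1, one_pos, Real.exp (Real.exp 100), fun X hX sm _hc _hs1 _hs2 _hs3 hFT => ?_⟩
  have hγ0 : (0:ℝ) ≤ γ := by norm_num at hγ ⊢; linarith
  have hX0 : (0:ℝ) < X := lt_of_lt_of_le (Real.exp_pos _) hX
  have hX1 : (1:ℝ) ≤ X := le_trans (Real.one_le_exp (Real.exp_pos 100).le) hX
  have hlog : Real.exp 100 ≤ Real.log X := by
    rw [← Real.log_exp (Real.exp 100)]
    exact Real.log_le_log (Real.exp_pos _) hX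
  have hlog1 : (1:ℝ) ≤ Real.log X := by
    have := Real.add_one_le_exp (100:ℝ); linarith
  set k := ⌊Real.log X⌋₊ with hkdef
  have hk1 : 1 ≤ k := Nat.le_floor (by exact_mod_cast hlog1)
  have hkR : (1:ℝ) ≤ (k:ℝ) := by exact_mod_cast hk1
  have hε0 : 0 < eps γ θ X := Real.rpow_pos_of_pos hX0 _
  have hH0 : 0 < H γ θ X := div_pos (by positivity) hε0
  have hπ : (0:ℝ) < Real.pi := Real.pi_pos
  set f : ℝ → ℂ := fun t => fourierTrans sm t * S₁ γ l₀ X (l₁ * t) * S₁ γ l₀ X (l₂ * t) *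
    S₄ γ l₀ X (l₃ * t) * e (η * t) with hfdef
  set S : Set ℝ := {t : ℝ | H γ θ X < |t|} with hSdef
  by_cases hInt : IntegrableOn f S
  swap
  · rw [integral_undef hInt]; simp
  set a : ℝ := -((k:ℝ) + 1) with hadef
  have ha : a < -1 := by rw [hadef]; linarith
  set c : ℝ := 8 * X ^ 9 * (1 / Real.pi) * (4 * (k:ℝ) / (Real.pi * eps γ θ X)) ^ k with hcdef
  set g : ℝ → ℝ := fun t => c * |t| ^ a with hgdef
  have hc0 : 0 ≤ c := by positivity
  -- pointwise bound
  have hpt : ∀ t ∈ S, ‖f t‖ ≤ g t := by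
    intro t ht
    have habs : H γ θ X < |t| := ht
    have ht0 : t ≠ 0 := by
      intro h; rw [h, abs_zero] at habs; linarith
    have htpos : 0 < |t| := lt_trans hH0 habs
    have hΦ := hFT t ht0
    have hΦ0 : (0:ℝ) ≤ 1 / (Real.pi * |t|) *
        ((k:ℝ) / (2 * Real.pi * |t| * eps γ θ X / 8)) ^ k := by positivity
    have hnorm : ‖f t‖ = ‖fourierTrans sm t‖ * ‖S₁ γ l₀ X (l₁ * t)‖ * ‖S₁ γ l₀ X (l₂ * t)‖ *
        ‖S₄ γ l₀ X (l₃ * t)‖ * 1 := by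
      rw [hfdef]; simp only [norm_mul, e_norm]
    rw [hnorm, mul_one]
    have key : (1 / (Real.pi * |t|) *
        ((k:ℝ) / (2 * Real.pi * |t| * eps γ θ X / 8)) ^ k) * (2 * X ^ 3) * (2 * X ^ 3) *
        (2 * X ^ 3) = g t := by
      have h2 : (k:ℝ) / (2 * Real.pi * |t| * eps γ θ X / 8)
          = (4 * (k:ℝ) / (Real.pi * eps γ θ X)) * |t|⁻¹ := by
        field_simp; ring
      have h3 : |t| ^ a = (|t| ^ (k + 1 : ℕ))⁻¹ := by
        rw [hadef, ← Real.rpow_natCast |t| (k+1), ← Real.rpow_neg (abs_nonneg t)]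
        push_cast; ring_nf
      have htne : |t| ≠ 0 := ne_of_gt htpos
      have hπne : Real.pi ≠ 0 := ne_of_gt hπ
      simp only [hgdef]
      rw [h2, mul_pow, h3, hcdef]
      field_simp
      ring
      rw [inv_pow, mul_assoc |t|, mul_inv_cancel₀ (pow_ne_zero _ htne), mul_one]
    rw [← key]
    have b1 := S1_bound γ l₀ X (l₁ * t) hγ0 hX1
    have b2 := S1_bound γ l₀ X (l₂ * t) hγ0 hX1
    have b3 := S4_bound γ l₀ X (l₃ * t) hγ0 hX1
    have n1 : (0:ℝ) ≤ ‖fourierTrans sm t‖ := norm_nonneg _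
    exact mul_le_mul (mul_le_mul (mul_le_mul hΦ b1 (norm_nonneg _) hΦ0) b2 (norm_nonneg _)
      (by positivity)) b3 (norm_nonneg _) (by positivity)
  -- set decomposition
  have hSeq : S = Iio (-(H γ θ X)) ∪ Ioi (H γ θ X) := by
    ext t
    simp only [hSdef, mem_setOf_eq, mem_union, mem_Iio, mem_Ioi, lt_abs]
    constructor
    · rintro (h | h)
      · right; exact h
      · left; linarith
    · rintro (h | h)
      · right; linarith
      · left; exact h
  have hSm : MeasurableSet S := by
    rw [hSeq]; exact measurableSet_Iio.union measurableSet_Ioi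
  -- integrability of g
  have hgIoi : IntegrableOn g (Ioi (H γ θ X)) := by
    have base : IntegrableOn (fun t : ℝ => c * t ^ a) (Ioi (H γ θ X)) :=
      (integrableOn_Ioi_rpow_of_lt ha hH0).const_mul c
    refine base.congr_fun (fun x hx => ?_) measurableSet_Ioi
    rw [hgdef]; simp only
    rw [abs_of_pos (lt_trans hH0 hx)]
  have hgIio : IntegrableOn g (Iio (-(H γ θ X))) := by
    have hpre : (Neg.neg : ℝ → ℝ) ⁻¹' (Iio (-(H γ θ X))) = Ioi (H γ θ X) := by
      ext x; simp only [mem_preimage, mem_Iio, mem_Ioi, neg_lt_neg_iff]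
    have hcomp : IntegrableOn (g ∘ Neg.neg) ((Neg.neg : ℝ → ℝ) ⁻¹' (Iio (-(H γ θ X)))) := by
      rw [hpre]
      refine hgIoi.congr_fun (fun x _ => ?_) measurableSet_Ioi
      simp [hgdef, Function.comp, abs_neg]
    exact (MeasurePreserving.integrableOn_comp_preimage
      (Measure.measurePreserving_neg (volume : Measure ℝ))
      (Homeomorph.neg ℝ).measurableEmbedding).mp hcomp
  have hgS : IntegrableOn g S := by rw [hSeq]; exact hgIio.union hgIoi
  -- neg-side integral equals pos-side
  have hneg : ∫ t in Iio (-(H γ θ X)), g t = ∫ t in Ioi (H γ θ X), g t := by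
    calc ∫ t in Iio (-(H γ θ X)), g t = ∫ t in Iic (-(H γ θ X)), g t :=
          (integral_Iic_eq_integral_Iio).symm
      _ = ∫ t in Iic (-(H γ θ X)), g (-t) := by
          refine setIntegral_congr_fun measurableSet_Iic (fun x _ => ?_)
          simp [hgdef, abs_neg]
      _ = ∫ t in Ioi (-(-(H γ θ X))), g t := integral_comp_neg_Iic _ g
      _ = ∫ t in Ioi (H γ θ X), g t := by rw [neg_neg]
  have hdisj : Disjoint (Iio (-(H γ θ X))) (Ioi (H γ θ X)) := by
    rw [Set.disjoint_left]
    intro x hx hx'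
    simp only [mem_Iio, mem_Ioi] at hx hx'
    linarith
  have hIoiVal : ∫ t in Ioi (H γ θ X), g t = c * (H γ θ X ^ (-(k:ℝ)) / (k:ℝ)) := by
    calc ∫ t in Ioi (H γ θ X), g t = ∫ t in Ioi (H γ θ X), c * t ^ a := by
          refine setIntegral_congr_fun measurableSet_Ioi (fun x hx => ?_)
          simp only [hgdef]
          rw [abs_of_pos (lt_trans hH0 hx)]
      _ = c * ∫ t in Ioi (H γ θ X), t ^ a := integral_const_mul c _
      _ = c * (-(H γ θ X) ^ (a + 1) / (a + 1)) := by rw [integral_Ioi_rpow_of_lt ha hH0]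
      _ = c * (H γ θ X ^ (-(k:ℝ)) / (k:ℝ)) := by
          congr 1
          rw [show a + 1 = -(k:ℝ) by rw [hadef]; ring]
          rw [neg_div_neg_eq]
  -- main chain
  calc ‖∫ t in S, f t‖ ≤ ∫ t in S, ‖f t‖ := norm_integral_le_integral_norm _
    _ ≤ ∫ t in S, g t := setIntegral_mono_on hInt.norm hgS hSm hpt
    _ = 2 * (c * (H γ θ X ^ (-(k:ℝ)) / (k:ℝ))) := by
        rw [hSeq, setIntegral_union hdisj measurableSet_Ioi hgIio hgIoi, hneg, hIoiVal]
        ring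
    _ ≤ 1 := by
        rw [hcdef]
        exact numeric X (eps γ θ X) hX hε0
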